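/- Let C := e^{-rT}·∫_ℝ (S_T(x) − K)⁺ dγ(x) and let P_i(k) := e^{-rT}·∫_ℝ (k − S_T(x))⁺ dγ(x) for k ∈ ℝ. For any v with 0 ≤ v ≤ C, the seller's and buyer's minimal risk exposures under the risk function R₁(x) = x⁺ coincide, i.e. max(e^{rT}(C − v), 0) = ∫_ℝ (v·e^{rT} − (S_T(x) − K)⁺)⁺ dγ(x), if and only if v = C − (P_i(K + v·e^{rT}) − P_i(K)). (Equal-risk price formula for a European call option under a short selling ban with risk function x⁺.) -/
import Mathlib


open MeasureTheory ProbabilityTheory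

/-- Equal-risk price formula for a European call option under a short selling ban
with risk function `R₁(x) = x⁺`. -/
theorem equal_risk_call_price_R1
    (S K σ T r : ℝ) (hS : 0 < S) (hK : 0 < K) (hσ : 0 < σ) (hT : 0 < T)
    (ST : ℝ → ℝ)
    (hST : ∀ x, ST x = S * Real.exp ((r - σ ^ 2 / 2) * T + σ * Real.sqrt T * x))
    (C : ℝ)
    (hC : C = Real.exp (-r * T) * ∫ x, max (ST x - K) 0 ∂(gaussianReal 0 1))
    (Pi : ℝ → ℝ)
    (hPi : ∀ k, Pi k = Real.exp (-r * T) * ∫ x, max (k - ST x) 0 ∂(gaussianReal 0 1))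
    (v : ℝ) (hv0 : 0 ≤ v) (hvC : v ≤ C) :
    (max (Real.exp (r * T) * (C - v)) 0
        = ∫ x, max (v * Real.exp (r * T) - max (ST x - K) 0) 0 ∂(gaussianReal 0 1))
      ↔ v = C - (Pi (K + v * Real.exp (r * T)) - Pi K) := by
  set μ := gaussianReal (0 : ℝ) 1 with hμdef
  have hSTfun : ST = fun x => S * Real.exp ((r - σ ^ 2 / 2) * T + σ * Real.sqrt T * x) :=
    funext hST
  have hcont : Continuous ST := by rw [hSTfun]; continuity
  have hSTpos : ∀ x, 0 < ST x := by
    intro x; rw [hST]; positivity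
  set w := v * Real.exp (r * T) with hw
  have hw0 : 0 ≤ w := by positivity
  have hint : ∀ a : ℝ, Integrable (fun x => max (a - ST x) 0) μ := by
    intro a
    apply Integrable.mono' (integrable_const (max a 0))
    · exact ((continuous_const.sub hcont).max continuous_const).aestronglyMeasurable
    · filter_upwards with x
      rw [Real.norm_eq_abs, abs_of_nonneg (le_max_right _ _)]
      exact max_le_max (by linarith [(hSTpos x).le]) le_rfl
  have hpt : ∀ x, max (w - max (ST x - K) 0) 0
      = max (K + w - ST x) 0 - max (K - ST x) 0 := by
    intro x
    rcases le_total (ST x) K with h | h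
    · rw [max_eq_right (by linarith : ST x - K ≤ 0),
        max_eq_left (by linarith : (0:ℝ) ≤ K - ST x),
        max_eq_left (by linarith : (0:ℝ) ≤ K + w - ST x), sub_zero,
        max_eq_left hw0]
      ring
    · rw [max_eq_left (by linarith : (0:ℝ) ≤ ST x - K),
        max_eq_right (by linarith : K - ST x ≤ 0), sub_zero]
      congr 1
      ring
  have hInt : (∫ x, max (w - max (ST x - K) 0) 0 ∂μ)
      = (∫ x, max (K + w - ST x) 0 ∂μ) - ∫ x, max (K - ST x) 0 ∂μ := by
    rw [← integral_sub (hint _) (hint _)]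
    exact integral_congr_ae (Filter.Eventually.of_forall hpt)
  have hmax : max (Real.exp (r * T) * (C - v)) 0 = Real.exp (r * T) * (C - v) :=
    max_eq_left (mul_nonneg (Real.exp_pos _).le (by linarith))
  have hexp : Real.exp (-r * T) * Real.exp (r * T) = 1 := by
    rw [← Real.exp_add]
    norm_num
  rw [hmax, hInt, hPi, hPi]
  set A := ∫ x, max (K + w - ST x) 0 ∂μ
  set B := ∫ x, max (K - ST x) 0 ∂μ
  constructor
  · intro h
    linear_combination (-(Real.exp (-r * T))) * h + (C - v) * hexp
  · intro h
    have h2 : Real.exp (-r * T) * (A - B) = C - v := by linear_combination h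
    calc Real.exp (r * T) * (C - v)
        = Real.exp (r * T) * (Real.exp (-r * T) * (A - B)) := by rw [h2]
      _ = A - B := by rw [← mul_assoc, mul_comm (Real.exp (r*T)), hexp, one_mul]
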